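/- Let φ₁, …, φ_n : ℂ → ℂ be analytic at a point w ∈ ℂ. Consider the function F(z) = det_{j,k}[φ_j(z_k)] / Δ(z) defined on tuples z = (z₁,…,z_n) with pairwise distinct entries, where Δ(z) = ∏_{j>k}(z_j − z_k). Then, as z tends to the constant tuple (w, …, w) within the set of tuples with pairwise distinct entries, F(z) tends to det_{j,k}[ φ_j^{(k−1)}(w) / (k−1)! ] = W[φ₁, …, φ_n](w) / ∏_{k=1}^{n} (k−1)!. In particular, the homogeneous limit of the alternant ratio exists and is given by the Wronskian of the φ_j (up to the factorial normalization). -/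

import Mathlib

open Topology Filter

/-- The Vandermonde determinant `Δ(w) = ∏_{j>k} (w_j − w_k)`. -/
def vand {m : ℕ} (w : Fin m → ℂ) : ℂ :=
  ∏ j : Fin m, ∏ k ∈ Finset.Iio j, (w j - w k)

section AuxiliaryLemmas

open Metric Complex

lemma detIdentity (n : ℕ) (φ : Fin n → ℂ → ℂ) (z : Fin n → ℂ) :
    (Matrix.of fun j k : Fin n => φ j (z k)).det / vand z
      = (Matrix.of fun j m : Fin n =>
          ∑ i ∈ Finset.Iic m, φ j (z i) * (∏ t ∈ (Finset.Iic m).erase i, (z i - z t))⁻¹).det := by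
  classical
  set L : Matrix (Fin n) (Fin n) ℂ :=
    Matrix.of fun i m : Fin n =>
      if i ∈ Finset.Iic m then (∏ t ∈ (Finset.Iic m).erase i, (z i - z t))⁻¹ else 0 with hLdef
  have hML : (Matrix.of fun j k : Fin n => φ j (z k)) * L = Matrix.of fun j m : Fin n =>
      ∑ i ∈ Finset.Iic m, φ j (z i) * (∏ t ∈ (Finset.Iic m).erase i, (z i - z t))⁻¹ := by
    ext j m
    simp only [Matrix.mul_apply, Matrix.of_apply, hLdef, mul_ite, mul_zero]
    rw [Finset.sum_ite_mem, Finset.univ_inter]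
  have hL : L.det = (vand z)⁻¹ := by
    have ht : L.BlockTriangular id := by
      intro i m him
      have him' : (m : Fin n) < i := him
      simp only [hLdef, Matrix.of_apply, Finset.mem_Iic]
      rw [if_neg (not_le.mpr him')]
    rw [Matrix.det_of_upperTriangular ht, vand, ← Finset.prod_inv_distrib]
    refine Finset.prod_congr rfl fun i _ => ?_
    simp [hLdef, Finset.Iic_erase]
  rw [div_eq_mul_inv, ← hL, ← Matrix.det_mul, hML]

lemma partialFractions {ι : Type*} [DecidableEq ι] (s : Finset ι) (v : ι → ℂ)
    (hv : Set.InjOn v s) (hs : s.Nonempty) (x : ℂ) (hx : ∀ t ∈ s, x ≠ v t) :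
    ∑ i ∈ s, (∏ t ∈ s.erase i, (v i - v t))⁻¹ * (x - v i)⁻¹
      = (∏ t ∈ s, (x - v t))⁻¹ := by
  have h1 := Lagrange.sum_basis hv hs
  have h2 := congrArg (Polynomial.eval x) h1
  rw [Polynomial.eval_finset_sum, Polynomial.eval_one] at h2
  have h3 : ∀ i ∈ s, Polynomial.eval x (Lagrange.basis s v i)
      = ∏ t ∈ s.erase i, ((v i - v t)⁻¹ * (x - v t)) := by
    intro i hi
    simp [Lagrange.basis, Lagrange.basisDivisor, Polynomial.eval_prod]
  rw [Finset.sum_congr rfl h3] at h2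
  have hxs : ∀ t ∈ s, x - v t ≠ 0 := fun t ht => sub_ne_zero.mpr (hx t ht)
  have key : ∀ i ∈ s, (∏ t ∈ s.erase i, (v i - v t))⁻¹ * (x - v i)⁻¹
      = (∏ t ∈ s.erase i, ((v i - v t)⁻¹ * (x - v t))) * (∏ t ∈ s, (x - v t))⁻¹ := by
    intro i hi
    have hB : (∏ t ∈ s.erase i, (x - v t)) ≠ 0 :=
      Finset.prod_ne_zero_iff.mpr fun t ht => hxs t (Finset.mem_of_mem_erase ht)
    rw [Finset.prod_mul_distrib, ← Finset.mul_prod_erase _ (fun t => x - v t) hi,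
      Finset.prod_inv_distrib, mul_inv]
    calc ((∏ t ∈ s.erase i, (v i - v t))⁻¹ * (x - v i)⁻¹)
        = (∏ t ∈ s.erase i, (v i - v t))⁻¹ * (x - v i)⁻¹ *
            ((∏ t ∈ s.erase i, (x - v t)) * (∏ t ∈ s.erase i, (x - v t))⁻¹) := by
          rw [mul_inv_cancel₀ hB, mul_one]
      _ = (∏ t ∈ s.erase i, (v i - v t))⁻¹ * (∏ t ∈ s.erase i, (x - v t)) *
            ((x - v i)⁻¹ * (∏ t ∈ s.erase i, (x - v t))⁻¹) := by ring
  rw [Finset.sum_congr rfl key, ← Finset.sum_mul, h2, one_mul]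

lemma keyLimit {n : ℕ} (w : ℂ) (f : ℂ → ℂ) (hf : AnalyticAt ℂ f w) (m : Fin n) :
    Tendsto (fun z : Fin n → ℂ =>
        ∑ i ∈ Finset.Iic m, f (z i) * (∏ t ∈ (Finset.Iic m).erase i, (z i - z t))⁻¹)
      (𝓝[{z : Fin n → ℂ | Function.Injective z}] (fun _ => w))
      (𝓝 (iteratedDeriv (m : ℕ) f w / (Nat.factorial (m : ℕ) : ℂ))) := by
  classical
  -- radius of analyticity
  obtain ⟨ε, hε, hball⟩ := Metric.eventually_nhds_iff_ball.mp hf.eventually_analyticAt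
  set r : ℝ := ε / 2 with hrdef
  have hr : 0 < r := by positivity
  have hd : DifferentiableOn ℂ f (closedBall w r) := by
    intro x hx
    have hx' : x ∈ ball w ε := by
      rw [mem_closedBall] at hx; rw [mem_ball]
      have : r < ε := by rw [hrdef]; linarith
      linarith
    exact ((hball x hx').differentiableAt).differentiableWithinAt
  have hdc : DiffContOnCl ℂ f (ball w r) :=
    (hd.mono closure_ball_subset_closedBall).diffContOnCl
  set R : NNReal := ⟨r, hr.le⟩ with hRdef
  have hps : HasFPowerSeriesOnBall f (cauchyPowerSeries f w r) w (R : ENNReal) :=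
    hdc.hasFPowerSeriesOnBall (R := R) hr
  -- Claim A : the Cauchy integral for the (m+1)-st power equals the Taylor coefficient
  have hA : (2 * (Real.pi : ℂ) * I)⁻¹ • (∮ ζ in C(w, r), ((ζ - w) ^ ((m : ℕ) + 1))⁻¹ • f ζ)
      = iteratedDeriv (m : ℕ) f w / (Nat.factorial (m : ℕ) : ℂ) := by
    have h1 := cauchyPowerSeries_apply f w r (m : ℕ) 1
    have h2 : ∀ ζ : ℂ, ((1 : ℂ) / (ζ - w)) ^ (m : ℕ) • (ζ - w)⁻¹ • f ζ
        = ((ζ - w) ^ ((m : ℕ) + 1))⁻¹ • f ζ := by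
      intro ζ
      rw [smul_smul]
      congr 1
      rw [one_div, ← pow_succ, inv_pow]
    simp only [h2] at h1
    have h3 := hps.factorial_smul (1 : ℂ) (m : ℕ)
    rw [← iteratedDeriv_eq_iteratedFDeriv] at h3
    have hfac : ((Nat.factorial (m : ℕ) : ℕ) : ℂ) ≠ 0 :=
      Nat.cast_ne_zero.mpr (Nat.factorial_ne_zero (m : ℕ))
    have hpi : (2 * (Real.pi : ℂ) * I) ≠ 0 :=
      mul_ne_zero (mul_ne_zero two_ne_zero (ofReal_ne_zero.mpr Real.pi_ne_zero)) I_ne_zero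
    rw [← h3, h1, nsmul_eq_mul]
    field_simp
  -- the parametric Cauchy integral
  set S : Set (Fin n → ℂ) := {z : Fin n → ℂ | Function.Injective z} with hSdef
  set c : (Fin n → ℂ) → ℂ :=
    fun z => ∮ ζ in C(w, r), (∏ t ∈ Finset.Iic m, (ζ - z t))⁻¹ • f ζ with hcdef
  have hfsph : ContinuousOn f (closedBall w r) := hd.continuousOn
  have hnz : ∀ (z : Fin n → ℂ), (∀ t, z t ∈ ball w r) → ∀ θ : ℝ,
      (∏ t ∈ Finset.Iic m, (circleMap w r θ - z t)) ≠ 0 := by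
    intro z hz θ
    refine Finset.prod_ne_zero_iff.mpr fun t _ => sub_ne_zero.mpr ?_
    intro hzero
    have h1 : dist (circleMap w r θ) w = r := mem_sphere.mp (circleMap_mem_sphere w hr.le θ)
    have h2 : dist (circleMap w r θ) w < r := by
      rw [hzero]; exact mem_ball.mp (hz t)
    exact absurd h1 (ne_of_lt h2)
  set U : Set (Fin n → ℂ) := {z | ∀ t, z t ∈ ball w r} with hUdef
  have hUopen : IsOpen U := by
    have : U = ⋂ t : Fin n, (fun z : Fin n → ℂ => z t) ⁻¹' (ball w r) := by
      ext z; simp [hUdef, Set.mem_iInter]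
    rw [this]
    exact isOpen_iInter_of_finite fun t => isOpen_ball.preimage (continuous_apply t)
  have hUmem : U ∈ 𝓝 (fun _ : Fin n => w) :=
    hUopen.mem_nhds fun t => mem_ball_self hr
  have hsphne : ∀ ζ : ℂ, ζ ∈ sphere w r → ∀ x : ℂ, x ∈ ball w r → ζ ≠ x := by
    intro ζ hζ x hx hteq
    have h1 : dist ζ w = r := mem_sphere.mp hζ
    have h2 : dist ζ w < r := by rw [hteq]; exact mem_ball.mp hx
    exact absurd h1 (ne_of_lt h2)
  have hfc : Continuous fun θ : ℝ => f (circleMap w r θ) :=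
    hfsph.comp_continuous (continuous_circleMap w r)
      (fun θ => sphere_subset_closedBall (circleMap_mem_sphere w hr.le θ))
  have hcont : ContinuousAt c (fun _ => w) := by
    refine ContinuousOn.continuousAt ?_ hUmem
    rw [continuousOn_iff_continuous_restrict]
    have hrepr : (U.restrict c) = fun x : U => ∫ θ in (0:ℝ)..(2*Real.pi),
        deriv (circleMap w r) θ •
          (∏ t ∈ Finset.Iic m, (circleMap w r θ - x.1 t))⁻¹ • f (circleMap w r θ) := rfl
    change Continuous (U.restrict c)
    rw [hrepr]
    apply intervalIntegral.continuous_parametric_intervalIntegral_of_continuous'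
    have h1 : Continuous fun p : U × ℝ => deriv (circleMap w r) p.2 := by
      simp only [deriv_circleMap]
      exact ((continuous_circleMap 0 r).comp continuous_snd).mul continuous_const
    have h2 : Continuous fun p : U × ℝ =>
        (∏ t ∈ Finset.Iic m, (circleMap w r p.2 - p.1.1 t))⁻¹ := by
      apply Continuous.inv₀
      · apply continuous_finset_prod
        intro t _
        exact ((continuous_circleMap w r).comp continuous_snd).sub
          (((continuous_apply t).comp continuous_subtype_val).comp continuous_fst)
      · intro p
        exact hnz p.1.1 p.1.2 p.2
    have h3 : Continuous fun p : U × ℝ => f (circleMap w r p.2) := by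
      apply hfsph.comp_continuous ((continuous_circleMap w r).comp continuous_snd)
      exact fun p => sphere_subset_closedBall (circleMap_mem_sphere w hr.le p.2)
    exact h1.smul (h2.smul h3)
  have h2pi : (2 * (Real.pi : ℂ) * I) ≠ 0 :=
    mul_ne_zero (mul_ne_zero two_ne_zero (ofReal_ne_zero.mpr Real.pi_ne_zero)) I_ne_zero
  -- value at the constant tuple
  have hcw : c (fun _ => w) = ∮ ζ in C(w, r), ((ζ - w) ^ ((m : ℕ) + 1))⁻¹ • f ζ := by
    have hfun : (fun ζ : ℂ => (∏ t ∈ Finset.Iic m, (ζ - w))⁻¹ • f ζ)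
        = fun ζ : ℂ => ((ζ - w) ^ ((m : ℕ) + 1))⁻¹ • f ζ := by
      funext ζ
      rw [Finset.prod_const, Fin.card_Iic]
    simp only [hcdef]
    rw [hfun]
  have hev : ∀ᶠ z in 𝓝[S] (fun _ : Fin n => w),
      (∑ i ∈ Finset.Iic m, f (z i) * (∏ t ∈ (Finset.Iic m).erase i, (z i - z t))⁻¹)
        = (2 * (Real.pi : ℂ) * I)⁻¹ • c z := by
    filter_upwards [mem_nhdsWithin_of_mem_nhds hUmem, self_mem_nhdsWithin] with z hzU hzS
    have hzinj : Function.Injective z := hzS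
    have hinj : Set.InjOn z ↑(Finset.Iic m) := fun a _ b _ hab => hzinj hab
    have hne : Finset.Nonempty (Finset.Iic m) := ⟨m, Finset.mem_Iic.mpr le_rfl⟩
    have hPF : Set.EqOn
        (fun ζ : ℂ => (∏ t ∈ Finset.Iic m, (ζ - z t))⁻¹ • f ζ)
        (fun ζ : ℂ => ∑ i ∈ Finset.Iic m,
          (∏ t ∈ (Finset.Iic m).erase i, (z i - z t))⁻¹ • ((ζ - z i)⁻¹ • f ζ))
        (sphere w r) := by
      intro ζ hζ
      have hx : ∀ t ∈ Finset.Iic m, ζ ≠ z t := fun t _ => hsphne ζ hζ (z t) (hzU t)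
      have hpf := partialFractions (Finset.Iic m) z hinj hne ζ hx
      simp only [smul_eq_mul]
      rw [← hpf, Finset.sum_mul]
      exact Finset.sum_congr rfl fun i _ => by ring
    have hsum : c z = ∑ i ∈ Finset.Iic m,
        (∏ t ∈ (Finset.Iic m).erase i, (z i - z t))⁻¹ •
          (∮ ζ in C(w, r), (ζ - z i)⁻¹ • f ζ) := by
      simp only [hcdef]
      rw [circleIntegral.integral_congr hr.le hPF]
      simp only [circleIntegral]
      have hd1 : Continuous fun θ : ℝ => deriv (circleMap w r) θ := by
        simp only [deriv_circleMap]
        exact (continuous_circleMap 0 r).mul continuous_const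
      have hgint : ∀ i ∈ Finset.Iic m, IntervalIntegrable (fun θ : ℝ =>
          deriv (circleMap w r) θ • ((∏ t ∈ (Finset.Iic m).erase i, (z i - z t))⁻¹ •
            ((circleMap w r θ - z i)⁻¹ • f (circleMap w r θ))))
          MeasureTheory.volume 0 (2 * Real.pi) := by
        intro i _
        apply Continuous.intervalIntegrable
        refine hd1.smul (continuous_const.fun_smul (Continuous.fun_smul ?_ hfc))
        refine Continuous.inv₀ ((continuous_circleMap w r).sub continuous_const) ?_
        intro θ
        exact sub_ne_zero.mpr
          (hsphne _ (circleMap_mem_sphere w hr.le θ) (z i) (hzU i))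
      calc (∫ θ : ℝ in (0)..(2 * Real.pi), deriv (circleMap w r) θ •
              ∑ i ∈ Finset.Iic m, (∏ t ∈ (Finset.Iic m).erase i, (z i - z t))⁻¹ •
                ((circleMap w r θ - z i)⁻¹ • f (circleMap w r θ)))
          = ∫ θ : ℝ in (0)..(2 * Real.pi), ∑ i ∈ Finset.Iic m,
              deriv (circleMap w r) θ • ((∏ t ∈ (Finset.Iic m).erase i, (z i - z t))⁻¹ •
                ((circleMap w r θ - z i)⁻¹ • f (circleMap w r θ))) := by
            congr 1
            funext θ
            rw [Finset.smul_sum]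
        _ = ∑ i ∈ Finset.Iic m, ∫ θ : ℝ in (0)..(2 * Real.pi),
              deriv (circleMap w r) θ • ((∏ t ∈ (Finset.Iic m).erase i, (z i - z t))⁻¹ •
                ((circleMap w r θ - z i)⁻¹ • f (circleMap w r θ))) :=
            intervalIntegral.integral_finset_sum hgint
        _ = ∑ i ∈ Finset.Iic m, (∏ t ∈ (Finset.Iic m).erase i, (z i - z t))⁻¹ •
              ∫ θ : ℝ in (0)..(2 * Real.pi),
                deriv (circleMap w r) θ • ((circleMap w r θ - z i)⁻¹ • f (circleMap w r θ)) := by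
            refine Finset.sum_congr rfl fun i _ => ?_
            rw [← intervalIntegral.integral_smul]
            congr 1
            funext θ
            rw [smul_comm]
    have hsum2 : c z = ∑ i ∈ Finset.Iic m,
        (∏ t ∈ (Finset.Iic m).erase i, (z i - z t))⁻¹ •
          ((2 * (Real.pi : ℂ) * I) • f (z i)) := by
      rw [hsum]
      exact Finset.sum_congr rfl fun i _ => by
        rw [hdc.circleIntegral_sub_inv_smul (hzU i)]
    rw [hsum2, Finset.smul_sum]
    refine Finset.sum_congr rfl fun i _ => ?_
    simp only [smul_eq_mul]
    have hone : (2 * (Real.pi : ℂ) * I)⁻¹ * (2 * (Real.pi : ℂ) * I) = 1 :=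
      inv_mul_cancel₀ h2pi
    linear_combination (-(f (z i) * (∏ t ∈ (Finset.Iic m).erase i, (z i - z t))⁻¹)) * hone
  have htends : Tendsto (fun z : Fin n → ℂ => (2 * (Real.pi : ℂ) * I)⁻¹ • c z)
      (𝓝[S] (fun _ : Fin n => w))
      (𝓝 (iteratedDeriv (m : ℕ) f w / (Nat.factorial (m : ℕ) : ℂ))) := by
    rw [← hA, ← hcw]
    exact (hcont.tendsto.const_smul _).mono_left nhdsWithin_le_nhds
  exact htends.congr' (hev.mono fun z hz => hz.symm)

end AuxiliaryLemmas

/-- Homogeneous limit of the alternant ratio: as `z → (w,…,w)` through tuples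
with pairwise distinct entries, `det[φ_j(z_k)]/Δ(z) → det[φ_j^{(k−1)}(w)/(k−1)!]`, which
equals the Wronskian `W[φ₁,…,φ_n](w)` divided by `∏_k (k−1)!`. -/
theorem alternant_homogeneous_limit (n : ℕ) (w : ℂ) (φ : Fin n → ℂ → ℂ)
    (hφ : ∀ j : Fin n, AnalyticAt ℂ (φ j) w) :
    Tendsto
      (fun z : Fin n → ℂ =>
        (Matrix.of fun j k : Fin n => φ j (z k)).det / vand z)
      (𝓝[{z : Fin n → ℂ | Function.Injective z}] (fun _ => w))
      (𝓝 ((Matrix.of fun j k : Fin n =>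
        iteratedDeriv (k : ℕ) (φ j) w / (Nat.factorial (k : ℕ) : ℂ)).det))
    ∧ (Matrix.of fun j k : Fin n => iteratedDeriv (k : ℕ) (φ j) w / (Nat.factorial (k : ℕ) : ℂ)).det
        = (Matrix.of fun j k : Fin n => iteratedDeriv (k : ℕ) (φ j) w).det
            / ∏ k ∈ Finset.range n, (Nat.factorial k : ℂ) := by
  constructor
  · have hfun : (fun z : Fin n → ℂ => (Matrix.of fun j k : Fin n => φ j (z k)).det / vand z)
        = fun z : Fin n → ℂ => (Matrix.of fun j m : Fin n =>
            ∑ i ∈ Finset.Iic m, φ j (z i) * (∏ t ∈ (Finset.Iic m).erase i, (z i - z t))⁻¹).det :=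
      funext fun z => detIdentity n φ z
    rw [hfun]
    have hmat : Tendsto (fun z : Fin n → ℂ => (Matrix.of fun j m : Fin n =>
          ∑ i ∈ Finset.Iic m, φ j (z i) * (∏ t ∈ (Finset.Iic m).erase i, (z i - z t))⁻¹))
        (𝓝[{z : Fin n → ℂ | Function.Injective z}] fun _ => w)
        (𝓝 (Matrix.of fun j k : Fin n =>
          iteratedDeriv (k : ℕ) (φ j) w / (Nat.factorial (k : ℕ) : ℂ))) :=
      tendsto_pi_nhds.mpr fun j => tendsto_pi_nhds.mpr fun m => keyLimit w (φ j) (hφ j) m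
    exact ((Continuous.matrix_det continuous_id).tendsto _).comp hmat
  · have hdet := Matrix.det_mul_row (fun k : Fin n => ((Nat.factorial (k : ℕ) : ℂ))⁻¹)
      (Matrix.of fun j k : Fin n => iteratedDeriv (k : ℕ) (φ j) w)
    have hentry : (Matrix.of fun j k : Fin n =>
          iteratedDeriv (k : ℕ) (φ j) w / (Nat.factorial (k : ℕ) : ℂ))
        = Matrix.of fun j k : Fin n => ((Nat.factorial (k : ℕ) : ℂ))⁻¹ *
            (Matrix.of fun j k : Fin n => iteratedDeriv (k : ℕ) (φ j) w) j k := by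
      ext j k
      simp [div_eq_mul_inv, mul_comm]
    rw [hentry, hdet]
    have hprod : (∏ k : Fin n, ((Nat.factorial (k : ℕ) : ℂ))⁻¹)
        = (∏ k ∈ Finset.range n, (Nat.factorial k : ℂ))⁻¹ := by
      rw [Finset.prod_inv_distrib, Fin.prod_univ_eq_prod_range (fun k => ((Nat.factorial k : ℕ) : ℂ)) n]
    rw [hprod, inv_mul_eq_div]
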